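/- Let n = 2 and β = a₁ + a₂ ≤ 1, and let f″_ℓ(x) = ζ (d₂ x₁ − d₁ x₂) + z₀ (an affine function). Let T = {x ∈ ℝ₊² : (x₂ = p x₁ or x₂ = q x₁) and x₁^{a₁} x₂^{a₂} ∈ {ℓ, u}} (a set of four points). Then every function g that is convex on conv(T) and satisfies g(x) ≤ x₁^{a₁} x₂^{a₂} for all x ∈ conv(T) also satisfies g(x) ≤ f″_ℓ(x) for all x ∈ conv(T); i.e., f″_ℓ is the lower envelope of f over conv(T). -/

import Mathlib

open Real

/-- For `n = 2` and `β = a₁ + a₂ ≤ 1`, the affine function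
`f″_ℓ(x) = ζ (d₂ x₁ − d₁ x₂) + z₀` dominates every convex minorant of `f` on
`conv(T)`, where `T = (P₁₂ ∪ Q₁₂) ∩ (C_ℓ ∪ C_u)`. -/
theorem second_lower_envelope_on_convT (a₁ a₂ ℓ u p q β d₁ d₂ lam z₀ ζ : ℝ)
    (ha₁ : 0 < a₁) (ha₂ : 0 < a₂) (hβ : β = a₁ + a₂) (hβ1 : β ≤ 1)
    (hℓ : 0 < ℓ) (hℓu : ℓ < u) (hp : 0 < p) (hpq : p < q)
    (hd₁ : d₁ = q ^ (-(a₂ / β)) - p ^ (-(a₂ / β)))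
    (hd₂ : d₂ = q ^ (a₁ / β) - p ^ (a₁ / β))
    (hlam : lam = p ^ a₂ / (d₂ - d₁ * p) ^ β)
    (hz₀ : z₀ = (u ^ (1 / β) * ℓ - ℓ ^ (1 / β) * u) / (u ^ (1 / β) - ℓ ^ (1 / β)))
    (hζ : ζ = lam ^ (1 / β) * (u - ℓ) / (u ^ (1 / β) - ℓ ^ (1 / β))) :
    ∀ g : ℝ × ℝ → ℝ,
      ConvexOn ℝ
        (convexHull ℝ {x : ℝ × ℝ | (0 ≤ x.1 ∧ 0 ≤ x.2) ∧
          (x.2 = p * x.1 ∨ x.2 = q * x.1) ∧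
          (x.1 ^ a₁ * x.2 ^ a₂ = ℓ ∨ x.1 ^ a₁ * x.2 ^ a₂ = u)}) g →
      (∀ x ∈ convexHull ℝ {x : ℝ × ℝ | (0 ≤ x.1 ∧ 0 ≤ x.2) ∧
          (x.2 = p * x.1 ∨ x.2 = q * x.1) ∧
          (x.1 ^ a₁ * x.2 ^ a₂ = ℓ ∨ x.1 ^ a₁ * x.2 ^ a₂ = u)},
        g x ≤ x.1 ^ a₁ * x.2 ^ a₂) →
      ∀ x ∈ convexHull ℝ {x : ℝ × ℝ | (0 ≤ x.1 ∧ 0 ≤ x.2) ∧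
          (x.2 = p * x.1 ∨ x.2 = q * x.1) ∧
          (x.1 ^ a₁ * x.2 ^ a₂ = ℓ ∨ x.1 ^ a₁ * x.2 ^ a₂ = u)},
        g x ≤ ζ * (d₂ * x.1 - d₁ * x.2) + z₀ := by
  intro g hg hle x hx
  set S : Set (ℝ × ℝ) := {x : ℝ × ℝ | (0 ≤ x.1 ∧ 0 ≤ x.2) ∧
          (x.2 = p * x.1 ∨ x.2 = q * x.1) ∧
          (x.1 ^ a₁ * x.2 ^ a₂ = ℓ ∨ x.1 ^ a₁ * x.2 ^ a₂ = u)} with hSdef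
  have hq : 0 < q := hp.trans hpq
  have hβpos : 0 < β := by rw [hβ]; positivity
  have hbne : β ≠ 0 := hβpos.ne'
  have hu : 0 < u := hℓ.trans hℓu
  have hDpos : 0 < u ^ (1/β) - ℓ ^ (1/β) := by
    have := Real.rpow_lt_rpow hℓ.le hℓu (by positivity : (0:ℝ) < 1/β)
    linarith
  have hDne : u ^ (1/β) - ℓ ^ (1/β) ≠ 0 := hDpos.ne'
  have hd₂pos : 0 < d₂ := by
    rw [hd₂]
    have := Real.rpow_lt_rpow hp.le hpq (by positivity : (0:ℝ) < a₁/β)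
    linarith
  have hd₁neg : d₁ < 0 := by
    rw [hd₁]
    have hne : -(a₂/β) < 0 := by
      have : (0:ℝ) < a₂/β := by positivity
      linarith
    have := Real.rpow_lt_rpow_of_neg hp hpq hne
    linarith
  have hcp : 0 < d₂ - d₁ * p := by nlinarith
  have hcq : 0 < d₂ - d₁ * q := by nlinarith
  -- λ^{1/β} (d₂ - d₁ p) = p^{a₂/β}
  have hlamp : lam ^ (1/β) * (d₂ - d₁ * p) = p ^ (a₂/β) := by
    rw [hlam, Real.div_rpow (by positivity) (by positivity),
      ← Real.rpow_mul hp.le, ← Real.rpow_mul hcp.le,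
      mul_one_div, mul_one_div, div_self hbne, Real.rpow_one]
    field_simp
  -- the p and q slopes match:
  have hkey : (d₂ - d₁ * q) * p ^ (a₂/β) = (d₂ - d₁ * p) * q ^ (a₂/β) := by
    have hp1 : p ^ (a₁/β) * p ^ (a₂/β) = p := by
      rw [← Real.rpow_add hp]
      rw [show a₁/β + a₂/β = 1 by field_simp [hβ]; linarith]
      exact Real.rpow_one p
    have hq1 : q ^ (a₁/β) * q ^ (a₂/β) = q := by
      rw [← Real.rpow_add hq]
      rw [show a₁/β + a₂/β = 1 by field_simp [hβ]; linarith]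
      exact Real.rpow_one q
    have hpn : p ^ (-(a₂/β)) = (p ^ (a₂/β))⁻¹ := Real.rpow_neg hp.le _
    have hqn : q ^ (-(a₂/β)) = (q ^ (a₂/β))⁻¹ := Real.rpow_neg hq.le _
    have hs : (0:ℝ) < p ^ (a₂/β) := Real.rpow_pos_of_pos hp _
    have ht : (0:ℝ) < q ^ (a₂/β) := Real.rpow_pos_of_pos hq _
    rw [hd₁, hd₂, hpn, hqn]
    set P := p ^ (a₁/β) with hP
    set Q := q ^ (a₁/β) with hQ
    set s := p ^ (a₂/β) with hs'
    set t := q ^ (a₂/β) with ht'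
    rw [← hp1, ← hq1]
    field_simp
    ring
  have hlamq : lam ^ (1/β) * (d₂ - d₁ * q) = q ^ (a₂/β) := by
    have hs : (0:ℝ) < p ^ (a₂/β) := Real.rpow_pos_of_pos hp _
    have h := congrArg (fun z => lam ^ (1/β) * z) hkey
    simp only [← mul_assoc] at h
    rw [hlamp] at h
    have := mul_right_cancel₀ hs.ne' (by linarith [h] : lam ^ (1/β) * (d₂ - d₁ * q) * p ^ (a₂/β) = q ^ (a₂/β) * p ^ (a₂/β))
    exact this
  -- the affine function agrees with f on S
  have key : ∀ t ∈ S, ζ * (d₂ * t.1 - d₁ * t.2) + z₀ = t.1 ^ a₁ * t.2 ^ a₂ := by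
    rintro ⟨t₁, t₂⟩ ⟨⟨ht₁, ht₂⟩, hr, hv⟩
    obtain ⟨r, ⟨hlr, hrpos⟩, hrt⟩ :
        ∃ r, (lam ^ (1/β) * (d₂ - d₁ * r) = r ^ (a₂/β) ∧ 0 < r) ∧ t₂ = r * t₁ := by
      rcases hr with h | h
      exacts [⟨p, ⟨hlamp, hp⟩, h⟩, ⟨q, ⟨hlamq, hq⟩, h⟩]
    have ht1 : 0 < t₁ := by
      rcases ht₁.lt_or_eq with h | h
      · exact h
      · exfalso
        rw [← h, Real.zero_rpow ha₁.ne', zero_mul] at hv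
        rcases hv with h' | h' <;> linarith
    have hf : t₁ ^ a₁ * t₂ ^ a₂ = r ^ a₂ * t₁ ^ β := by
      rw [hrt, Real.mul_rpow hrpos.le ht1.le, hβ, Real.rpow_add ht1]
      ring
    have hrt1 : r ^ (a₂/β) * t₁ = (r ^ a₂ * t₁ ^ β) ^ (1/β) := by
      rw [Real.mul_rpow (by positivity) (by positivity),
        ← Real.rpow_mul hrpos.le, ← Real.rpow_mul ht1.le,
        mul_one_div, mul_one_div, div_self hbne, Real.rpow_one]
    rcases hv with hv | hv <;> rw [hv] <;> rw [hv] at hf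
    · have h1 : ζ * (d₂ * t₁ - d₁ * t₂) = (u - ℓ) * ℓ ^ (1/β) / (u ^ (1/β) - ℓ ^ (1/β)) := by
        rw [hrt, hζ]
        have : lam ^ (1/β) * (u - ℓ) / (u ^ (1/β) - ℓ ^ (1/β)) * (d₂ * t₁ - d₁ * (r * t₁))
            = (u - ℓ) / (u ^ (1/β) - ℓ ^ (1/β)) * ((lam ^ (1/β) * (d₂ - d₁ * r)) * t₁) := by
          ring
        rw [this, hlr, hrt1, ← hf]
        ring
      rw [h1, hz₀]
      field_simp
      ring
    · have h1 : ζ * (d₂ * t₁ - d₁ * t₂) = (u - ℓ) * u ^ (1/β) / (u ^ (1/β) - ℓ ^ (1/β)) := by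
        rw [hrt, hζ]
        have : lam ^ (1/β) * (u - ℓ) / (u ^ (1/β) - ℓ ^ (1/β)) * (d₂ * t₁ - d₁ * (r * t₁))
            = (u - ℓ) / (u ^ (1/β) - ℓ ^ (1/β)) * ((lam ^ (1/β) * (d₂ - d₁ * r)) * t₁) := by
          ring
        rw [this, hlr, hrt1, ← hf]
        ring
      rw [h1, hz₀]
      field_simp
      ring
  -- the affine function is concave on the hull
  have hAconc : ConcaveOn ℝ (convexHull ℝ S)
      (fun x : ℝ × ℝ => ζ * (d₂ * x.1 - d₁ * x.2) + z₀) := by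
    refine ⟨convex_convexHull ℝ S, ?_⟩
    intro y _ z _ a b _ _ hab
    apply le_of_eq
    simp only [Prod.fst_add, Prod.snd_add, Prod.smul_fst, Prod.smul_snd, smul_eq_mul]
    linear_combination z₀ * hab
  have hconv := hg.sub hAconc
  obtain ⟨y, hyS, hxy⟩ := hconv.exists_ge_of_mem_convexHull (subset_convexHull ℝ S) hx
  have h1 := hle y (subset_convexHull ℝ S hyS)
  have h2 := key y hyS
  simp only [Pi.sub_apply] at hxy
  linarith
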